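/- arXiv:1111.6984 — 2 statements merged into one kernel-verified Lean document; each statement's English description precedes it below -/
import Mathlib

section
/- Every element of finite order in the group of formally invertible power series maps of ℂⁿ without constant term is formally conjugate, by a map tangent to the identity, to its linear part. -/
noncomputable section

def compP (f g : PowerSeries ℂ) : PowerSeries ℂ :=
  PowerSeries.mk fun n =>
    ∑ j ∈ Finset.range (n + 1), PowerSeries.coeff j f * PowerSeries.coeff n (g ^ j)

def iterP (g : PowerSeries ℂ) : ℕ → PowerSeries ℂ
  | 0 => PowerSeries.X
  | m + 1 => compP g (iterP g m)

abbrev FormalMap (n : ℕ) := Fin n → MvPowerSeries (Fin n) ℂ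

def degreeOf {n : ℕ} (d : Fin n →₀ ℕ) : ℕ := d.sum fun _ m => m

def substM {n : ℕ} (G : FormalMap n) (f : MvPowerSeries (Fin n) ℂ) :
    MvPowerSeries (Fin n) ℂ :=
  fun d =>
    ∑ e ∈ Finset.Iic (Finsupp.equivFunOnFinite.symm fun _ => degreeOf d),
      MvPowerSeries.coeff e f * MvPowerSeries.coeff d (∏ i, G i ^ e i)

def compM {n : ℕ} (F G : FormalMap n) : FormalMap n := fun i => substM G (F i)

def idM (n : ℕ) : FormalMap n := fun i => MvPowerSeries.X i

def iterM {n : ℕ} (F : FormalMap n) : ℕ → FormalMap n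
  | 0 => idM n
  | m + 1 => compM F (iterM F m)

def linMatrix {n : ℕ} (F : FormalMap n) : Matrix (Fin n) (Fin n) ℂ :=
  fun i j => MvPowerSeries.coeff (Finsupp.single j 1) (F i)

def linMap {n : ℕ} (F : FormalMap n) : FormalMap n :=
  fun i => ∑ j, MvPowerSeries.C (linMatrix F i j) * MvPowerSeries.X j

def substPM (q : MvPowerSeries (Fin 2) ℂ) (φ : PowerSeries ℂ) : MvPowerSeries (Fin 2) ℂ :=
  fun d =>
    ∑ j ∈ Finset.range (degreeOf d + 1),
      PowerSeries.coeff j φ * MvPowerSeries.coeff d (q ^ j)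

def pXY : MvPowerSeries (Fin 2) ℂ := MvPowerSeries.X 0 * MvPowerSeries.X 1

def Mmap (φ ψ : PowerSeries ℂ) : FormalMap 2 :=
  ![MvPowerSeries.X 0 * substPM pXY φ, MvPowerSeries.X 1 * substPM pXY ψ]

namespace Aux
open MvPowerSeries Finset

variable {n : ℕ}

/-! ### degree basics -/

lemma degreeOf_eq (d : Fin n →₀ ℕ) : degreeOf d = ∑ i, d i :=
  Finsupp.sum_fintype d _ (fun _ => rfl)

lemma degreeOf_add (p q : Fin n →₀ ℕ) : degreeOf (p + q) = degreeOf p + degreeOf q := by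
  simp [degreeOf_eq, Finset.sum_add_distrib]

lemma degreeOf_zero : degreeOf (0 : Fin n →₀ ℕ) = 0 := by simp [degreeOf_eq]

lemma degreeOf_eq_zero {d : Fin n →₀ ℕ} (h : degreeOf d = 0) : d = 0 := by
  rw [degreeOf_eq] at h
  ext i
  simpa using Finset.sum_eq_zero_iff.mp h i (Finset.mem_univ i)

lemma apply_le_degreeOf (d : Fin n →₀ ℕ) (i : Fin n) : d i ≤ degreeOf d := by
  rw [degreeOf_eq]
  exact Finset.single_le_sum (fun _ _ => Nat.zero_le _) (Finset.mem_univ i)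

/-- multi-indices of total degree ≤ D -/
def lowSet (n D : ℕ) : Finset (Fin n →₀ ℕ) :=
  (Finset.Iic (Finsupp.equivFunOnFinite.symm fun _ => D)).filter fun e => degreeOf e ≤ D

lemma mem_lowSet {D : ℕ} {e : Fin n →₀ ℕ} : e ∈ lowSet n D ↔ degreeOf e ≤ D := by
  constructor
  · exact fun h => (Finset.mem_filter.mp h).2
  · intro h
    refine Finset.mem_filter.mpr ⟨Finset.mem_Iic.mpr ?_, h⟩
    intro i
    exact le_trans (apply_le_degreeOf e i) (by simpa using h)

lemma lowSet_mono {D D' : ℕ} (h : D ≤ D') : (lowSet n D) ⊆ lowSet n D' :=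
  fun e he => mem_lowSet.mpr (le_trans (mem_lowSet.mp he) h)

/-! ### goodness and vanishing -/

def goodM (F : FormalMap n) : Prop := ∀ i, constantCoeff (F i) = 0

lemma coeff_multiset_prod_eq_zero (l : Multiset (MvPowerSeries (Fin n) ℂ))
    (hl : ∀ g ∈ l, constantCoeff g = 0) (d : Fin n →₀ ℕ)
    (hd : degreeOf d < Multiset.card l) :
    coeff d l.prod = 0 := by
  induction l using Multiset.induction generalizing d with
  | empty => simp at hd
  | cons a s ih =>
      rw [Multiset.prod_cons, coeff_mul]
      refine Finset.sum_eq_zero fun p hp => ?_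
      rcases eq_or_ne p.1 0 with h1 | h1
      · have : coeff p.1 a = 0 := by
          rw [h1]; exact hl a (Multiset.mem_cons_self a s)
        simp [this]
      · have hdd : p.1 + p.2 = d := Finset.HasAntidiagonal.mem_antidiagonal.mp hp
        have h2 : coeff p.2 s.prod = 0 := by
          apply ih (fun g hg => hl g (Multiset.mem_cons_of_mem hg))
          have hp1 : 1 ≤ degreeOf p.1 := by
            rcases Nat.eq_zero_or_pos (degreeOf p.1) with h | h
            · exact absurd (degreeOf_eq_zero h) h1
            · exact h
          have : degreeOf p.1 + degreeOf p.2 = degreeOf d := by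
            rw [← degreeOf_add, hdd]
          simp at hd
          omega
        simp [h2]

def powMultiset (G : FormalMap n) (e : Fin n →₀ ℕ) : Multiset (MvPowerSeries (Fin n) ℂ) :=
  Finset.univ.val.bind fun i => Multiset.replicate (e i) (G i)

lemma prod_powMultiset (G : FormalMap n) (e : Fin n →₀ ℕ) :
    (powMultiset G e).prod = ∏ i, G i ^ e i := by
  rw [powMultiset, Multiset.prod_bind, Finset.prod_eq_multiset_prod]
  congr 1
  exact Multiset.map_congr rfl fun i _ => Multiset.prod_replicate _ _

lemma card_powMultiset (G : FormalMap n) (e : Fin n →₀ ℕ) :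
    Multiset.card (powMultiset G e) = degreeOf e := by
  rw [powMultiset, Multiset.card_bind, degreeOf_eq, ← Finset.sum_eq_multiset_sum]
  simp

lemma mem_powMultiset {G : FormalMap n} {e : Fin n →₀ ℕ} {g : MvPowerSeries (Fin n) ℂ}
    (hg : g ∈ powMultiset G e) : ∃ i, g = G i := by
  rcases Multiset.mem_bind.mp hg with ⟨i, _, hi⟩
  exact ⟨i, Multiset.eq_of_mem_replicate hi⟩

lemma coeff_prod_pow_eq_zero {G : FormalMap n} (hG : goodM G) {d e : Fin n →₀ ℕ}
    (h : degreeOf d < degreeOf e) :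
    coeff d (∏ i, G i ^ e i) = 0 := by
  rw [← prod_powMultiset]
  apply coeff_multiset_prod_eq_zero
  · intro g hg; rcases mem_powMultiset hg with ⟨i, rfl⟩; exact hG i
  · rwa [card_powMultiset]

/-! ### the master coefficient formula -/

lemma coeff_substM {G : FormalMap n} (hG : goodM G) (f : MvPowerSeries (Fin n) ℂ)
    (d : Fin n →₀ ℕ) {S : Finset (Fin n →₀ ℕ)} (hS : lowSet n (degreeOf d) ⊆ S) :
    coeff d (substM G f) =
      ∑ e ∈ S, coeff e f * coeff d (∏ i, G i ^ e i) := by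
  have key : ∀ T : Finset (Fin n →₀ ℕ), lowSet n (degreeOf d) ⊆ T →
      (∑ e ∈ T, coeff e f * coeff d (∏ i, G i ^ e i)) =
      ∑ e ∈ lowSet n (degreeOf d), coeff e f * coeff d (∏ i, G i ^ e i) := by
    intro T hT
    refine (Finset.sum_subset hT fun e _ he => ?_).symm
    have : degreeOf d < degreeOf e := by
      by_contra h
      exact he (mem_lowSet.mpr (not_lt.mp h))
    rw [coeff_prod_pow_eq_zero hG this, mul_zero]
  have h1 : coeff d (substM G f) =
      ∑ e ∈ Finset.Iic (Finsupp.equivFunOnFinite.symm fun _ => degreeOf d),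
        coeff e f * coeff d (∏ i, G i ^ e i) := rfl
  rw [h1, key _ (Finset.filter_subset _ _), key S hS]

end Aux

namespace Aux
open MvPowerSeries Finset

variable {n : ℕ}

lemma substM_add (G : FormalMap n) (f g : MvPowerSeries (Fin n) ℂ) :
    substM G (f + g) = substM G f + substM G g := by
  ext d
  show substM G (f+g) d = substM G f d + substM G g d
  unfold substM
  rw [← Finset.sum_add_distrib]
  exact Finset.sum_congr rfl fun e _ => by rw [map_add, add_mul]

lemma substM_smul (G : FormalMap n) (c : ℂ) (f : MvPowerSeries (Fin n) ℂ) :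
    substM G (c • f) = c • substM G f := by
  ext d
  show substM G (c • f) d = c * substM G f d
  unfold substM
  rw [Finset.mul_sum]
  exact Finset.sum_congr rfl fun e _ => by rw [map_smul, smul_eq_mul, mul_assoc]

lemma substM_one {G : FormalMap n} (hG : goodM G) : substM G 1 = 1 := by
  apply MvPowerSeries.ext; intro d
  rw [coeff_substM hG 1 d (subset_refl _)]
  rw [Finset.sum_eq_single 0]
  · simp
  · intro e _ he
    rw [MvPowerSeries.coeff_one, if_neg he, zero_mul]
  · intro h0
    exact absurd (mem_lowSet.mpr (by rw [degreeOf_zero]; exact Nat.zero_le _)) h0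

lemma substM_mul {G : FormalMap n} (hG : goodM G) (f g : MvPowerSeries (Fin n) ℂ) :
    substM G (f * g) = substM G f * substM G g := by
  apply MvPowerSeries.ext; intro d
  set D := degreeOf d with hD
  set T : (Fin n →₀ ℕ) × (Fin n →₀ ℕ) → ℂ := fun pq =>
    coeff pq.1 f * coeff pq.2 g *
      coeff d ((∏ i, G i ^ pq.1 i) * (∏ i, G i ^ pq.2 i)) with hT
  have vanish : ∀ pq : (Fin n →₀ ℕ) × (Fin n →₀ ℕ), D < degreeOf pq.1 + degreeOf pq.2 →
      T pq = 0 := by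
    intro pq h
    have : (∏ i, G i ^ pq.1 i) * (∏ i, G i ^ pq.2 i) = ∏ i, G i ^ (pq.1 + pq.2) i := by
      rw [← Finset.prod_mul_distrib]
      exact Finset.prod_congr rfl fun i _ => by rw [Finsupp.add_apply, pow_add]
    rw [hT]
    simp only
    rw [this, coeff_prod_pow_eq_zero hG (by rw [degreeOf_add]; omega), mul_zero]
  have lhs : coeff d (substM G (f * g)) = ∑ pq ∈ lowSet n D ×ˢ lowSet n D, T pq := by
    rw [coeff_substM hG (f*g) d (subset_refl _)]
    have step1 : ∀ e ∈ lowSet n D,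
        coeff e (f * g) * coeff d (∏ i, G i ^ e i) =
        ∑ pq ∈ Finset.HasAntidiagonal.antidiagonal e, T pq := by
      intro e _
      rw [MvPowerSeries.coeff_mul, Finset.sum_mul]
      refine Finset.sum_congr rfl fun pq hpq => ?_
      have hsum : pq.1 + pq.2 = e := Finset.HasAntidiagonal.mem_antidiagonal.mp hpq
      rw [hT]
      simp only
      rw [← hsum]
      congr 2
      rw [← Finset.prod_mul_distrib]
      exact Finset.prod_congr rfl fun i _ => by rw [Finsupp.add_apply, pow_add]
    rw [Finset.sum_congr rfl step1, Finset.sum_sigma']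
    have bij : ∑ x ∈ (lowSet n D).sigma (fun e => Finset.HasAntidiagonal.antidiagonal e), T x.2 =
        ∑ pq ∈ (lowSet n D ×ˢ lowSet n D).filter
          (fun pq => degreeOf pq.1 + degreeOf pq.2 ≤ D), T pq := by
      refine Finset.sum_nbij' (fun x => x.2) (fun pq => ⟨pq.1 + pq.2, pq⟩) ?_ ?_ ?_ ?_ ?_
      · rintro ⟨e, pq⟩ hx
        dsimp only
        simp only [Finset.mem_sigma] at hx
        obtain ⟨he, hpq⟩ := hx
        have hsum : pq.1 + pq.2 = e := Finset.HasAntidiagonal.mem_antidiagonal.mp hpq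
        have hde : degreeOf e ≤ D := mem_lowSet.mp he
        have h1 : degreeOf pq.1 + degreeOf pq.2 = degreeOf e := by
          rw [← degreeOf_add, hsum]
        refine Finset.mem_filter.mpr ⟨Finset.mem_product.mpr
          ⟨mem_lowSet.mpr (by omega), mem_lowSet.mpr (by omega)⟩, by omega⟩
      · rintro ⟨p, q⟩ hpq
        have h := Finset.mem_filter.mp hpq
        refine Finset.mem_sigma.mpr ⟨mem_lowSet.mpr ?_, Finset.HasAntidiagonal.mem_antidiagonal.mpr rfl⟩
        rw [degreeOf_add]; exact h.2
      · rintro ⟨e, pq⟩ hx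
        simp only [Finset.mem_sigma] at hx
        have hsum : pq.1 + pq.2 = e := Finset.HasAntidiagonal.mem_antidiagonal.mp hx.2
        simp [hsum]
      · rintro ⟨p, q⟩ _; rfl
      · rintro ⟨e, pq⟩ _; rfl
    rw [bij]
    refine Finset.sum_subset (Finset.filter_subset _ _) fun pq _ hpq => ?_
    apply vanish
    by_contra h
    exact hpq (Finset.mem_filter.mpr ⟨‹pq ∈ _›, not_lt.mp h⟩)
  have rhs : coeff d (substM G f * substM G g) =
      ∑ pq ∈ lowSet n D ×ˢ lowSet n D, T pq := by
    rw [MvPowerSeries.coeff_mul]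
    have huv : ∀ uv ∈ Finset.HasAntidiagonal.antidiagonal d,
        coeff uv.1 (substM G f) * coeff uv.2 (substM G g) =
        ∑ pq ∈ lowSet n D ×ˢ lowSet n D,
          coeff pq.1 f * coeff pq.2 g *
            (coeff uv.1 (∏ i, G i ^ pq.1 i) * coeff uv.2 (∏ i, G i ^ pq.2 i)) := by
      intro uv huv
      have hsum : uv.1 + uv.2 = d := Finset.HasAntidiagonal.mem_antidiagonal.mp huv
      have hud : degreeOf uv.1 ≤ D := by
        rw [hD, ← hsum, degreeOf_add]; omega
      have hvd : degreeOf uv.2 ≤ D := by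
        rw [hD, ← hsum, degreeOf_add]; omega
      rw [coeff_substM hG f uv.1 (lowSet_mono hud),
          coeff_substM hG g uv.2 (lowSet_mono hvd), Finset.sum_mul_sum,
          ← Finset.sum_product']
      exact Finset.sum_congr rfl fun pq _ => by ring
    rw [Finset.sum_congr rfl huv, Finset.sum_comm]
    refine Finset.sum_congr rfl fun pq _ => ?_
    rw [hT]
    simp only
    rw [MvPowerSeries.coeff_mul, Finset.mul_sum]
  rw [lhs, rhs]

end Aux

namespace Aux
open MvPowerSeries Finset

variable {n : ℕ}

lemma lowSet_zero : lowSet n 0 = {0} := by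
  ext e
  simp only [mem_lowSet, Finset.mem_singleton, Nat.le_zero]
  exact ⟨fun h => degreeOf_eq_zero h, fun h => by simp [h, degreeOf_zero]⟩

lemma substM_C {G : FormalMap n} (hG : goodM G) (c : ℂ) :
    substM G (MvPowerSeries.C c) = MvPowerSeries.C c := by
  have h1 : (MvPowerSeries.C c) = c • (1 : MvPowerSeries (Fin n) ℂ) := by
    apply MvPowerSeries.ext; intro d
    rw [map_smul]
    simp [MvPowerSeries.coeff_one, coeff_C, apply_ite (c * ·)]
  rw [h1, substM_smul, substM_one hG]

lemma prod_pow_single (G : FormalMap n) (l : Fin n) :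
    (∏ i, G i ^ (Finsupp.single l 1) i) = G l := by
  rw [Finset.prod_eq_single l]
  · simp
  · intro j _ hj; rw [Finsupp.single_apply, if_neg (Ne.symm hj), pow_zero]
  · simp

lemma degreeOf_single (l : Fin n) (m : ℕ) : degreeOf (Finsupp.single l m) = m := by
  unfold degreeOf
  rw [Finsupp.sum_single_index rfl]

lemma substM_X {G : FormalMap n} (hG : goodM G) (j : Fin n) :
    substM G (MvPowerSeries.X j) = G j := by
  apply MvPowerSeries.ext; intro d
  rcases Nat.eq_zero_or_pos (degreeOf d) with hd | hd
  · have hd0 : d = 0 := degreeOf_eq_zero hd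
    rw [coeff_substM hG _ d (subset_refl _)]
    rw [hd0, degreeOf_zero, lowSet_zero]
    have : coeff (0 : Fin n →₀ ℕ) (X j : MvPowerSeries (Fin n) ℂ) = 0 := by
      rw [MvPowerSeries.coeff_X, if_neg]
      intro h
      rw [eq_comm, Finsupp.single_eq_zero] at h
      exact one_ne_zero h
    rw [Finset.sum_singleton, this, zero_mul]
    exact (hG j).symm
  · rw [coeff_substM hG _ d (subset_refl _)]
    rw [Finset.sum_eq_single (Finsupp.single j 1)]
    · rw [MvPowerSeries.coeff_X, if_pos rfl, one_mul, prod_pow_single]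
    · intro e _ he
      rw [MvPowerSeries.coeff_X, if_neg (by simpa using he), zero_mul]
    · intro h
      exact absurd (mem_lowSet.mpr (by rw [degreeOf_single]; omega)) h

lemma substM_pow {G : FormalMap n} (hG : goodM G) (f : MvPowerSeries (Fin n) ℂ) (m : ℕ) :
    substM G (f ^ m) = (substM G f) ^ m := by
  induction m with
  | zero => simpa using substM_one hG
  | succ m ih => rw [pow_succ, substM_mul hG, ih, pow_succ]

lemma substM_sum {G : FormalMap n} {α : Type*} (s : Finset α)
    (f : α → MvPowerSeries (Fin n) ℂ) :
    substM G (∑ x ∈ s, f x) = ∑ x ∈ s, substM G (f x) := by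
  classical
  induction s using Finset.induction with
  | empty =>
      apply MvPowerSeries.ext; intro d
      show coeff d (substM G 0) = coeff d 0
      have : substM G 0 = 0 := by
        ext e
        show substM G 0 e = 0
        unfold substM
        exact Finset.sum_eq_zero fun x _ => by simp
      rw [this]
  | insert _ _ hx ih => rw [Finset.sum_insert hx, substM_add, ih, Finset.sum_insert hx]

lemma substM_prod_pow {G : FormalMap n} (hG : goodM G) (H : FormalMap n) (e : Fin n →₀ ℕ) :
    substM G (∏ i, H i ^ e i) = ∏ i, (substM G (H i)) ^ e i := by
  classical
  have : ∀ (s : Finset (Fin n)), substM G (∏ i ∈ s, H i ^ e i) =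
      ∏ i ∈ s, (substM G (H i)) ^ e i := by
    intro s
    induction s using Finset.induction with
    | empty => simpa using substM_one hG
    | insert _ _ hx ih =>
        rw [Finset.prod_insert hx, substM_mul hG, ih, substM_pow hG, Finset.prod_insert hx]
  exact this Finset.univ

lemma constantCoeff_substM {G : FormalMap n} (hG : goodM G) (f : MvPowerSeries (Fin n) ℂ) :
    constantCoeff (substM G f) = constantCoeff f := by
  have h0 : constantCoeff (substM G f) = coeff 0 (substM G f) := by
    rw [coeff_zero_eq_constantCoeff]
  rw [h0, coeff_substM hG f 0 (subset_refl _), degreeOf_zero, lowSet_zero,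
    Finset.sum_singleton]
  simp

lemma goodM_compM {F G : FormalMap n} (hF : goodM F) (hG : goodM G) :
    goodM (compM F G) := fun i => by
  rw [compM, constantCoeff_substM hG]; exact hF i

lemma substM_assoc {G H : FormalMap n} (hG : goodM G) (hH : goodM H)
    (f : MvPowerSeries (Fin n) ℂ) :
    substM H (substM G f) = substM (compM G H) f := by
  apply MvPowerSeries.ext; intro d
  set D := degreeOf d with hD
  have rhs : coeff d (substM (compM G H) f) =
      ∑ e ∈ lowSet n D, ∑ e' ∈ lowSet n D,
        coeff e f * (coeff e' (∏ i, G i ^ e i) * coeff d (∏ i, H i ^ e' i)) := by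
    rw [coeff_substM (fun i => by rw [compM, constantCoeff_substM hH]; exact hG i) f d
      (subset_refl _)]
    refine Finset.sum_congr rfl fun e _ => ?_
    have : (∏ i, (compM G H) i ^ e i) = substM H (∏ i, G i ^ e i) := by
      rw [substM_prod_pow hH]
      rfl
    rw [this, coeff_substM hH _ d (subset_refl _), Finset.mul_sum]
  have lhs : coeff d (substM H (substM G f)) =
      ∑ e' ∈ lowSet n D, ∑ e ∈ lowSet n D,
        coeff e f * (coeff e' (∏ i, G i ^ e i) * coeff d (∏ i, H i ^ e' i)) := by
    rw [coeff_substM hH _ d (subset_refl _)]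
    refine Finset.sum_congr rfl fun e' he' => ?_
    rw [coeff_substM hG f e' (lowSet_mono (mem_lowSet.mp he')), Finset.sum_mul]
    exact Finset.sum_congr rfl fun e _ => by ring
  rw [lhs, rhs, Finset.sum_comm]

lemma compM_assoc {F G H : FormalMap n} (hG : goodM G) (hH : goodM H) :
    compM (compM F G) H = compM F (compM G H) := by
  funext i
  exact substM_assoc hG hH (F i)

lemma substM_id (f : MvPowerSeries (Fin n) ℂ) : substM (idM n) f = f := by
  apply MvPowerSeries.ext; intro d
  rw [coeff_substM (G := idM n) (fun i => MvPowerSeries.constantCoeff_X i) f d (subset_refl _)]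
  have hprod : ∀ e : Fin n →₀ ℕ, (∏ i, (idM n) i ^ e i) =
      MvPowerSeries.monomial e 1 := by
    intro e
    have h : ∀ i : Fin n, (idM n) i ^ e i = monomial (Finsupp.single i (e i)) 1 :=
      fun i => X_pow_eq i (e i)
    rw [Finset.prod_congr rfl fun i _ => h i]
    have key : ∀ (s : Finset (Fin n)), (∏ i ∈ s, monomial (Finsupp.single i (e i)) (1:ℂ)) =
        monomial (∑ i ∈ s, Finsupp.single i (e i)) 1 := by
      intro s
      induction s using Finset.induction with
      | empty => simp
      | insert _ _ hx ih =>
          rw [Finset.prod_insert hx, ih, Finset.sum_insert hx, monomial_mul_monomial, one_mul]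
    rw [key, Finsupp.univ_sum_single]
  rw [Finset.sum_eq_single d]
  · rw [hprod, MvPowerSeries.coeff_monomial_same, mul_one]
  · intro e _ he
    rw [hprod, MvPowerSeries.coeff_monomial, if_neg (by exact fun h => he h.symm), mul_zero]
  · intro h
    exact absurd (mem_lowSet.mpr (le_refl _)) h

lemma compM_id_right (F : FormalMap n) : compM F (idM n) = F := by
  funext i; exact substM_id (F i)

lemma compM_id_left {F : FormalMap n} (hF : goodM F) : compM (idM n) F = F := by
  funext i; exact substM_X hF i

end Aux

namespace Aux
open MvPowerSeries Finset

variable {n : ℕ}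

def Lmap (M : Matrix (Fin n) (Fin n) ℂ) : FormalMap n :=
  fun i => ∑ j, MvPowerSeries.C (M i j) * MvPowerSeries.X j

lemma linMap_eq_Lmap (F : FormalMap n) : linMap F = Lmap (linMatrix F) := rfl

lemma goodM_Lmap (M : Matrix (Fin n) (Fin n) ℂ) : goodM (Lmap M) := by
  intro i
  rw [Lmap, map_sum]
  refine Finset.sum_eq_zero fun j _ => ?_
  rw [map_mul, constantCoeff_X, mul_zero]

lemma degreeOf_eq_one {e : Fin n →₀ ℕ} (h : degreeOf e = 1) :
    ∃ l, e = Finsupp.single l 1 := by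
  rw [degreeOf_eq] at h
  have hex : ∃ l, e l ≠ 0 := by
    by_contra hc
    push_neg at hc
    rw [Finset.sum_congr rfl fun i _ => hc i] at h
    simp at h
  obtain ⟨l, hl⟩ := hex
  have hsplit : e l + ∑ i ∈ Finset.univ.erase l, e i = 1 := by
    rw [Finset.add_sum_erase _ _ (Finset.mem_univ l)]; exact h
  have hl1 : e l = 1 := by omega
  have hrest : ∀ i ∈ Finset.univ.erase l, e i = 0 :=
    Finset.sum_eq_zero_iff.mp (by omega)
  refine ⟨l, ?_⟩
  ext i
  rcases eq_or_ne i l with rfl | hi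
  · rw [hl1, Finsupp.single_eq_same]
  · rw [Finsupp.single_apply, if_neg (Ne.symm hi)]
    exact hrest i (Finset.mem_erase.mpr ⟨hi, Finset.mem_univ i⟩)

lemma lowSet_one_subset :
    (lowSet n 1 : Finset (Fin n →₀ ℕ)) ⊆
      insert 0 (Finset.image (fun l => Finsupp.single l 1) Finset.univ) := by
  intro e he
  have h := mem_lowSet.mp he
  interval_cases h' : degreeOf e
  · exact Finset.mem_insert.mpr (Or.inl (degreeOf_eq_zero h'))
  · obtain ⟨l, rfl⟩ := degreeOf_eq_one h'
    exact Finset.mem_insert.mpr (Or.inr (Finset.mem_image.mpr ⟨l, Finset.mem_univ l, rfl⟩))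

lemma linMatrix_compM {F G : FormalMap n} (hG : goodM G) :
    linMatrix (compM F G) = linMatrix F * linMatrix G := by
  funext i j
  have hd : degreeOf (Finsupp.single j 1) = 1 := degreeOf_single j 1
  rw [Matrix.mul_apply, linMatrix]
  show coeff (Finsupp.single j 1) (substM G (F i)) = _
  rw [coeff_substM hG (F i)
    (S := insert 0 (Finset.image (fun l : Fin n => Finsupp.single l 1) Finset.univ)) _
    (fun e he => lowSet_one_subset (by rwa [hd] at he))]
  have h0 : (0 : Fin n →₀ ℕ) ∉ Finset.image (fun l : Fin n => Finsupp.single l 1)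
      Finset.univ := by
    intro hmem
    obtain ⟨l, _, hl⟩ := Finset.mem_image.mp hmem
    rw [Finsupp.single_eq_zero] at hl
    exact one_ne_zero hl
  rw [Finset.sum_insert h0]
  have hz : coeff (Finsupp.single j 1) (∏ i, G i ^ (0 : Fin n →₀ ℕ) i) = 0 := by
    simp only [Finsupp.coe_zero, Pi.zero_apply, pow_zero, Finset.prod_const_one]
    rw [MvPowerSeries.coeff_one, if_neg (fun h => one_ne_zero (Finsupp.single_eq_zero.mp h))]
  rw [hz, mul_zero, zero_add]
  rw [Finset.sum_image (fun a _ b _ h => by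
    simpa using (Finsupp.single_left_injective one_ne_zero) h)]
  refine Finset.sum_congr rfl fun l _ => ?_
  rw [prod_pow_single]
  rfl

lemma linMatrix_idM : linMatrix (idM n) = 1 := by
  funext i j
  rw [linMatrix, idM, MvPowerSeries.coeff_X, Matrix.one_apply]
  by_cases h : i = j
  · rw [if_pos (by rw [h]), if_pos h]
  · rw [if_neg, if_neg h]
    intro hc
    exact h (by
      have := Finsupp.single_left_injective (α := Fin n) (one_ne_zero (α := ℕ)) hc
      exact this.symm)

lemma linMatrix_Lmap (M : Matrix (Fin n) (Fin n) ℂ) : linMatrix (Lmap M) = M := by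
  funext i j
  rw [linMatrix, Lmap, map_sum]
  rw [Finset.sum_eq_single j]
  · rw [MvPowerSeries.coeff_C_mul, MvPowerSeries.coeff_X, if_pos rfl, mul_one]
  · intro l _ hl
    rw [MvPowerSeries.coeff_C_mul, MvPowerSeries.coeff_X, if_neg, mul_zero]
    exact fun h => hl (Finsupp.single_left_injective one_ne_zero h).symm
  · intro h
    exact absurd (Finset.mem_univ j) h

end Aux

namespace Aux
open MvPowerSeries Finset

variable {n : ℕ}

lemma compM_Lmap {G : FormalMap n} (hG : goodM G) (M : Matrix (Fin n) (Fin n) ℂ) :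
    compM (Lmap M) G = fun i => ∑ j, MvPowerSeries.C (M i j) * G j := by
  funext i
  show substM G (∑ j, MvPowerSeries.C (M i j) * MvPowerSeries.X j) = _
  rw [substM_sum]
  exact Finset.sum_congr rfl fun j _ => by
    rw [substM_mul hG, substM_C hG, substM_X hG]

lemma Lmap_one : Lmap (1 : Matrix (Fin n) (Fin n) ℂ) = idM n := by
  funext i
  simp only [Lmap]
  rw [Finset.sum_eq_single i]
  · rw [Matrix.one_apply_eq, map_one, one_mul]; rfl
  · intro j _ hj
    rw [Matrix.one_apply_ne (Ne.symm hj), map_zero, zero_mul]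
  · intro h; exact absurd (Finset.mem_univ i) h

lemma Lmap_mul (M N : Matrix (Fin n) (Fin n) ℂ) :
    compM (Lmap M) (Lmap N) = Lmap (M * N) := by
  rw [compM_Lmap (goodM_Lmap N)]
  funext i
  simp only [Lmap]
  rw [Finset.sum_congr rfl fun x (_ : x ∈ Finset.univ) => Finset.mul_sum Finset.univ
    (fun j => MvPowerSeries.C (N x j) * MvPowerSeries.X j)
    (MvPowerSeries.C (M i x)), Finset.sum_comm]
  refine Finset.sum_congr rfl fun l _ => ?_
  rw [Matrix.mul_apply, map_sum, Finset.sum_mul]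
  exact Finset.sum_congr rfl fun j _ => by rw [map_mul, mul_assoc]

lemma goodM_iterM {F : FormalMap n} (hF : goodM F) (m : ℕ) : goodM (iterM F m) := by
  induction m with
  | zero => exact fun i => constantCoeff_X i
  | succ m ih => exact goodM_compM hF ih

lemma iterM_add {F : FormalMap n} (hF : goodM F) (a b : ℕ) :
    iterM F (a + b) = compM (iterM F a) (iterM F b) := by
  induction a with
  | zero => rw [Nat.zero_add]; exact (compM_id_left (goodM_iterM hF b)).symm
  | succ a ih =>
      have : a + 1 + b = (a + b) + 1 := by omega
      rw [this]
      show compM F (iterM F (a + b)) = _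
      rw [ih, ← compM_assoc (goodM_iterM hF a) (goodM_iterM hF b)]
      rfl

lemma iterM_one (F : FormalMap n) : iterM F 1 = F := compM_id_right F

lemma iterM_succ' {F : FormalMap n} (hF : goodM F) (m : ℕ) :
    iterM F (m + 1) = compM (iterM F m) F := by
  rw [iterM_add hF m 1, iterM_one]

lemma linMatrix_iterM {F : FormalMap n} (hF : goodM F) (m : ℕ) :
    linMatrix (iterM F m) = (linMatrix F) ^ m := by
  induction m with
  | zero => exact linMatrix_idM
  | succ m ih =>
      show linMatrix (compM F (iterM F m)) = _
      rw [linMatrix_compM (goodM_iterM hF m), ih, pow_succ']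

end Aux

namespace Aux
open MvPowerSeries Finset

variable {n : ℕ}

lemma exists_semiconj {k : ℕ} (hk : 0 < k) {F : FormalMap n} (hF : goodM F)
    (hFk : iterM F k = idM n) :
    ∃ H', goodM H' ∧ linMatrix H' = 1 ∧
      compM H' F = compM (Lmap (linMatrix F)) H' := by
  obtain ⟨k', rfl⟩ : ∃ k', k = k' + 1 := ⟨k - 1, by omega⟩
  set A := linMatrix F with hA
  have Apow : A ^ (k' + 1) = 1 := by
    rw [hA, ← linMatrix_iterM hF, hFk, linMatrix_idM]
  set B := A ^ k' with hB
  have hBA : ∀ m, B ^ m * A ^ m = 1 := by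
    intro m
    rw [hB, ← pow_mul, ← pow_add]
    have : k' * m + m = (k' + 1) * m := (Nat.succ_mul k' m).symm
    rw [this, pow_mul, Apow, one_pow]
  set u : ℕ → FormalMap n := fun m => compM (Lmap (B ^ m)) (iterM F m) with hu
  have hugood : ∀ m, goodM (u m) := fun m =>
    goodM_compM (goodM_Lmap _) (goodM_iterM hF m)
  set H' : FormalMap n := fun i => ((k' + 1 : ℕ) : ℂ)⁻¹ • ∑ m ∈ Finset.range (k' + 1), u m i
    with hH'
  have hkc : ((k' + 1 : ℕ) : ℂ) ≠ 0 := Nat.cast_ne_zero.mpr (Nat.succ_ne_zero k')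
  have hgood : goodM H' := by
    intro i
    rw [← coeff_zero_eq_constantCoeff_apply, hH']
    simp only
    rw [map_smul, map_sum]
    rw [Finset.sum_eq_zero fun m (_ : m ∈ Finset.range (k'+1)) =>
      (coeff_zero_eq_constantCoeff_apply ..).trans (hugood m i)]
    simp
  have hlin : linMatrix H' = 1 := by
    funext i j
    show coeff (Finsupp.single j 1) (H' i) = (1 : Matrix (Fin n) (Fin n) ℂ) i j
    rw [hH']
    simp only
    rw [map_smul, map_sum]
    have : ∀ m ∈ Finset.range (k' + 1),
        coeff (Finsupp.single j 1) (u m i) = (1 : Matrix (Fin n) (Fin n) ℂ) i j := by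
      intro m _
      have h1 : linMatrix (u m) = B ^ m * A ^ m := by
        rw [hu]
        simp only
        rw [linMatrix_compM (goodM_iterM hF m), linMatrix_Lmap, linMatrix_iterM hF]
      have : coeff (Finsupp.single j 1) (u m i) = linMatrix (u m) i j := rfl
      rw [this, h1, hBA]
    rw [Finset.sum_congr rfl this, Finset.sum_const, Finset.card_range, nsmul_eq_mul,
      smul_eq_mul, ← mul_assoc, inv_mul_cancel₀ hkc, one_mul]
  refine ⟨H', hgood, hlin, ?_⟩
  set v : ℕ → FormalMap n := fun m => compM (Lmap (B ^ m)) (iterM F (m + 1)) with hv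
  set w : ℕ → FormalMap n := fun m => compM (Lmap (A * B ^ m)) (iterM F m) with hw
  have hwv : ∀ m, w (m + 1) = v m := by
    intro m
    have hmat : A * B ^ (m + 1) = B ^ m := by
      rw [hB, ← pow_mul, ← pow_succ']
      have : k' * (m + 1) + 1 = k' * m + (k' + 1) := by rw [Nat.mul_succ]; omega
      rw [this, pow_add, Apow, mul_one, pow_mul]
    rw [hw, hv]
    simp only
    rw [hmat]
  have hw0 : w 0 = Lmap A := by
    rw [hw]
    simp only
    rw [pow_zero, mul_one]
    exact compM_id_right _
  have hvk : v k' = w 0 := by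
    rw [hv, hw0]
    simp only
    rw [hFk, compM_id_right]
    have h1 : A ^ k' * A = 1 := by
      rw [← pow_succ, Apow]
    have hBk : B ^ k' = A :=
      calc B ^ k' = A ^ (k' * k') := by rw [hB, ← pow_mul]
        _ = A ^ (k' * k') * (A ^ k' * A) := by rw [h1, mul_one]
        _ = A ^ (k' * k' + k') * A := by rw [← mul_assoc, ← pow_add]
        _ = (A ^ (k' + 1)) ^ k' * A := by
              rw [show k' * k' + k' = (k' + 1) * k' from (Nat.succ_mul k' k').symm, pow_mul]
        _ = A := by rw [Apow, one_pow, one_mul]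
    rw [hBk]
  have sumshift : ∀ i, ∑ m ∈ Finset.range (k' + 1), v m i =
      ∑ m ∈ Finset.range (k' + 1), w m i := by
    intro i
    rw [Finset.sum_range_succ (fun m => v m i) k', Finset.sum_range_succ' (fun m => w m i) k']
    rw [hvk]
    exact congrArg (· + w 0 i) (Finset.sum_congr rfl fun m _ => by rw [hwv])
  funext i
  -- LHS
  have lhs : compM H' F i = ((k' + 1 : ℕ) : ℂ)⁻¹ • ∑ m ∈ Finset.range (k' + 1), v m i := by
    show substM F (H' i) = _
    rw [hH']
    simp only
    rw [substM_smul, substM_sum]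
    congr 1
    refine Finset.sum_congr rfl fun m _ => ?_
    show compM (u m) F i = v m i
    rw [hu, hv]
    simp only
    rw [compM_assoc (goodM_iterM hF m) hF, ← iterM_succ' hF]
  have rhs : compM (Lmap A) H' i =
      ((k' + 1 : ℕ) : ℂ)⁻¹ • ∑ m ∈ Finset.range (k' + 1), w m i := by
    rw [compM_Lmap hgood]
    simp only
    rw [hH']
    simp only
    have step : ∀ j ∈ Finset.univ, MvPowerSeries.C (A i j) *
        (((k' + 1 : ℕ) : ℂ)⁻¹ • ∑ m ∈ Finset.range (k' + 1), u m j) =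
        ((k' + 1 : ℕ) : ℂ)⁻¹ • ∑ m ∈ Finset.range (k' + 1),
          MvPowerSeries.C (A i j) * u m j := by
      intro j _
      rw [mul_smul_comm, Finset.mul_sum]
    rw [Finset.sum_congr rfl step, ← Finset.smul_sum]
    congr 1
    rw [Finset.sum_comm]
    refine Finset.sum_congr rfl fun m _ => ?_
    have h2 : ∑ j, MvPowerSeries.C (A i j) * u m j = compM (Lmap A) (u m) i := by
      rw [compM_Lmap (hugood m)]
    rw [h2]
    have h3 : compM (Lmap A) (u m) = w m := by
      rw [hu, hw]
      simp only
      rw [← compM_assoc (goodM_Lmap _) (goodM_iterM hF m), Lmap_mul]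
    rw [h3]
  rw [lhs, rhs, sumshift]
end Aux

namespace Aux
open MvPowerSeries Finset

variable {n : ℕ}

lemma coeff_prod_congr (D₀ : ℕ) :
    ∀ l : Multiset (MvPowerSeries (Fin n) ℂ × MvPowerSeries (Fin n) ℂ),
    (∀ p ∈ l, constantCoeff p.1 = 0 ∧ constantCoeff p.2 = 0 ∧
      ∀ e : Fin n →₀ ℕ, degreeOf e < D₀ → coeff e p.1 = coeff e p.2) →
    ∀ d : Fin n →₀ ℕ, degreeOf d + 2 ≤ D₀ + Multiset.card l →
      coeff d (l.map Prod.fst).prod = coeff d (l.map Prod.snd).prod := by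
  intro l
  induction l using Multiset.induction with
  | empty => intro _ d _; rfl
  | cons a s ih =>
      intro hl d hd
      rw [Multiset.map_cons, Multiset.map_cons, Multiset.prod_cons, Multiset.prod_cons,
        coeff_mul, coeff_mul]
      refine Finset.sum_congr rfl fun p hp => ?_
      obtain ⟨ha1, ha2, ha3⟩ := hl a (Multiset.mem_cons_self a s)
      have hsum : p.1 + p.2 = d := Finset.HasAntidiagonal.mem_antidiagonal.mp hp
      have hdeg : degreeOf p.1 + degreeOf p.2 = degreeOf d := by rw [← degreeOf_add, hsum]
      have hcards : Multiset.card (a ::ₘ s) = Multiset.card s + 1 := by simp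
      rw [hcards] at hd
      by_cases hv : degreeOf p.2 < Multiset.card s
      · have hz1 : coeff p.2 (s.map Prod.fst).prod = 0 := by
          refine coeff_multiset_prod_eq_zero _ (fun g hg => ?_) _ (by simpa using hv)
          obtain ⟨q, hq, rfl⟩ := Multiset.mem_map.mp hg
          exact (hl q (Multiset.mem_cons_of_mem hq)).1
        have hz2 : coeff p.2 (s.map Prod.snd).prod = 0 := by
          refine coeff_multiset_prod_eq_zero _ (fun g hg => ?_) _ (by simpa using hv)
          obtain ⟨q, hq, rfl⟩ := Multiset.mem_map.mp hg
          exact (hl q (Multiset.mem_cons_of_mem hq)).2.1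
        rw [hz1, hz2, mul_zero, mul_zero]
      · rcases eq_or_ne p.1 0 with h0 | h0
        · have c1 : coeff p.1 a.1 = 0 := by
            rw [h0]; exact (coeff_zero_eq_constantCoeff_apply ..).trans ha1
          have c2 : coeff p.1 a.2 = 0 := by
            rw [h0]; exact (coeff_zero_eq_constantCoeff_apply ..).trans ha2
          rw [c1, c2, zero_mul, zero_mul]
        · have hu1 : 1 ≤ degreeOf p.1 := by
            rcases Nat.eq_zero_or_pos (degreeOf p.1) with hz | hpos
            · exact absurd (degreeOf_eq_zero hz) h0
            · exact hpos
          have hfst : coeff p.1 a.1 = coeff p.1 a.2 := ha3 _ (by omega)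
          have hrest := ih (fun q hq => hl q (Multiset.mem_cons_of_mem hq)) p.2 (by omega)
          rw [hfst, hrest]

lemma substM_congr_below {K K' : FormalMap n} (hK : goodM K) (hK' : goodM K')
    (D₀ : ℕ)
    (hagree : ∀ e : Fin n →₀ ℕ, degreeOf e < D₀ → ∀ i, coeff e (K i) = coeff e (K' i))
    {h : MvPowerSeries (Fin n) ℂ} (hh : ∀ e : Fin n →₀ ℕ, degreeOf e ≤ 1 → coeff e h = 0)
    {d : Fin n →₀ ℕ} (hd : degreeOf d ≤ D₀) :
    coeff d (substM K h) = coeff d (substM K' h) := by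
  rw [coeff_substM hK h d (subset_refl _), coeff_substM hK' h d (subset_refl _)]
  refine Finset.sum_congr rfl fun e _ => ?_
  by_cases h1 : degreeOf e ≤ 1
  · rw [hh e h1, zero_mul, zero_mul]
  · have h2 : 2 ≤ degreeOf e := by omega
    congr 1
    set l : Multiset (MvPowerSeries (Fin n) ℂ × MvPowerSeries (Fin n) ℂ) :=
      Finset.univ.val.bind (fun i => Multiset.replicate (e i) (K i, K' i)) with hldef
    have hfst : l.map Prod.fst = powMultiset K e := by
      rw [hldef, Multiset.map_bind, powMultiset]
      simp [Multiset.map_replicate]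
    have hsnd : l.map Prod.snd = powMultiset K' e := by
      rw [hldef, Multiset.map_bind, powMultiset]
      simp [Multiset.map_replicate]
    have hcard : Multiset.card l = degreeOf e := by
      rw [hldef, Multiset.card_bind, degreeOf_eq, ← Finset.sum_eq_multiset_sum]
      simp
    have hmem : ∀ p ∈ l, constantCoeff p.1 = 0 ∧
        constantCoeff p.2 = 0 ∧
        ∀ e' : Fin n →₀ ℕ, degreeOf e' < D₀ → coeff e' p.1 = coeff e' p.2 := by
      intro p hp
      rw [hldef] at hp
      obtain ⟨i, _, hi⟩ := Multiset.mem_bind.mp hp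
      obtain rfl := Multiset.eq_of_mem_replicate hi
      exact ⟨hK i, hK' i, fun e' he' => hagree e' he' i⟩
    have := coeff_prod_congr D₀ l hmem d (by omega)
    rw [← prod_powMultiset, ← prod_powMultiset, ← hfst, ← hsnd]
    exact this

/-- the Newton-type iteration sequence for inverting a tangent-to-identity map -/
def PsiSeq (H : FormalMap n) : ℕ → FormalMap n
  | 0 => idM n
  | s + 1 => fun i =>
      MvPowerSeries.X i - substM (PsiSeq H s) (H i - MvPowerSeries.X i)

lemma exists_right_inverse {H : FormalMap n} (hH : goodM H) (hlin : linMatrix H = 1) :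
    ∃ K : FormalMap n, goodM K ∧ compM H K = idM n := by
  set h : FormalMap n := fun i => H i - MvPowerSeries.X i with hhdef
  have hh : ∀ i, ∀ e : Fin n →₀ ℕ, degreeOf e ≤ 1 → coeff e (h i) = 0 := by
    intro i e he
    rw [hhdef]
    simp only
    rw [map_sub]
    interval_cases hdeg : degreeOf e
    · obtain rfl := degreeOf_eq_zero hdeg
      rw [(coeff_zero_eq_constantCoeff_apply ..).trans (hH i),
        (coeff_zero_eq_constantCoeff_apply ..).trans (constantCoeff_X i), sub_zero]
    · obtain ⟨j, rfl⟩ := degreeOf_eq_one hdeg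
      have e1 : coeff (Finsupp.single j 1) (H i) = linMatrix H i j := rfl
      rw [e1, hlin, MvPowerSeries.coeff_X, Matrix.one_apply]
      by_cases hij : i = j
      · rw [if_pos hij, if_pos (by rw [hij]), sub_self]
      · rw [if_neg hij, if_neg (fun hc =>
          hij (Finsupp.single_left_injective one_ne_zero hc).symm), sub_self]
  set Ks := PsiSeq H with hKsdef
  have hKs_succ : ∀ s i, Ks (s + 1) i = MvPowerSeries.X i - substM (Ks s) (h i) := by
    intro s i; rfl
  have hgoodKs : ∀ s, goodM (Ks s) := by
    intro s
    induction s with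
    | zero => exact fun i => constantCoeff_X i
    | succ s ih =>
        intro i
        rw [hKs_succ, map_sub, constantCoeff_X, constantCoeff_substM ih,
          ← coeff_zero_eq_constantCoeff_apply, hh i 0 (by rw [degreeOf_zero]; omega),
          sub_zero]
  have hagree : ∀ s, ∀ e : Fin n →₀ ℕ, degreeOf e ≤ s → ∀ i,
      coeff e (Ks (s + 1) i) = coeff e (Ks s i) := by
    intro s
    induction s with
    | zero =>
        intro e he i
        obtain rfl := degreeOf_eq_zero (Nat.le_zero.mp he)
        rw [(coeff_zero_eq_constantCoeff_apply ..).trans (hgoodKs 1 i),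
          (coeff_zero_eq_constantCoeff_apply ..).trans (hgoodKs 0 i)]
    | succ s ih =>
        intro e he i
        rw [hKs_succ, hKs_succ, map_sub, map_sub]
        congr 1
        exact substM_congr_below (hgoodKs (s + 1)) (hgoodKs s) (s + 1)
          (fun e' he' i' => ih e' (by omega) i') (hh i) he
  have hchain : ∀ s t, s ≤ t → ∀ e : Fin n →₀ ℕ, degreeOf e ≤ s → ∀ i,
      coeff e (Ks t i) = coeff e (Ks s i) := by
    intro s t hst
    induction t, hst using Nat.le_induction with
    | base => intro e _ _; rfl
    | succ t hst ih =>
        intro e he i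
        rw [hagree t e (by omega) i, ih e he i]
  set K : FormalMap n := fun i d => Ks (degreeOf d) i d with hKdef
  have hKcoeff : ∀ s (e : Fin n →₀ ℕ), degreeOf e ≤ s → ∀ i,
      coeff e (K i) = coeff e (Ks s i) := by
    intro s e he i
    have h1 : coeff e (K i) = Ks (degreeOf e) i e := rfl
    rw [h1]
    exact (hchain (degreeOf e) s he e (le_refl _) i).symm
  have hgoodK : goodM K := by
    intro i
    rw [← coeff_zero_eq_constantCoeff_apply,
      hKcoeff 0 0 (by rw [degreeOf_zero]) i,
      coeff_zero_eq_constantCoeff_apply]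
    exact hgoodKs 0 i
  have hfix : ∀ i, K i = MvPowerSeries.X i - substM K (h i) := by
    intro i
    apply MvPowerSeries.ext; intro d
    set s := degreeOf d with hs
    rw [hKcoeff (s + 1) d (by omega) i, hKs_succ, map_sub, map_sub]
    congr 1
    exact substM_congr_below (hgoodKs s) hgoodK s
      (fun e' he' i' => (hKcoeff s e' (by omega) i').symm) (hh i) (le_refl s)
  refine ⟨K, hgoodK, ?_⟩
  funext i
  show substM K (H i) = MvPowerSeries.X i
  have hHi : H i = MvPowerSeries.X i + h i := by rw [hhdef]; ring
  rw [hHi, substM_add, substM_X hgoodK]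
  rw [hfix i]
  ring

end Aux

namespace Aux
open MvPowerSeries Finset

variable {n : ℕ}

lemma exists_two_sided_inverse {H : FormalMap n} (hH : goodM H) (hlin : linMatrix H = 1) :
    ∃ K : FormalMap n, goodM K ∧ linMatrix K = 1 ∧
      compM H K = idM n ∧ compM K H = idM n := by
  obtain ⟨K, hKgood, hKright⟩ := exists_right_inverse hH hlin
  have hKlin : linMatrix K = 1 := by
    have h1 : linMatrix (compM H K) = linMatrix H * linMatrix K := linMatrix_compM hKgood
    rw [hKright, linMatrix_idM, hlin, one_mul] at h1
    exact h1.symm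
  obtain ⟨K₂, hK₂good, hK₂right⟩ := exists_right_inverse hKgood hKlin
  have hHK₂ : H = K₂ := by
    calc H = compM H (idM n) := (compM_id_right H).symm
      _ = compM H (compM K K₂) := by rw [hK₂right]
      _ = compM (compM H K) K₂ := (compM_assoc hKgood hK₂good).symm
      _ = compM (idM n) K₂ := by rw [hKright]
      _ = K₂ := compM_id_left hK₂good
  refine ⟨K, hKgood, hKlin, hKright, ?_⟩
  rw [hHK₂]
  exact hK₂right

end Aux

/-- Every element of finite order in the group of formally invertible power series maps of
ℂⁿ without constant term is formally conjugate, by a map tangent to the identity, to its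
linear part: there is H with L(H) = id and F ∘ H = H ∘ L(F). -/
theorem finite_order_formally_linearizable {n : ℕ} (k : ℕ) (hk : 0 < k)
    (F : FormalMap n)
    (hF0 : ∀ i, MvPowerSeries.constantCoeff (F i) = 0)
    (hFk : iterM F k = idM n) :
    ∃ H : FormalMap n,
      (∀ i, MvPowerSeries.constantCoeff (H i) = 0) ∧
      linMap H = idM n ∧
      compM F H = compM H (linMap F) := by
  have hF : Aux.goodM F := hF0
  obtain ⟨H', hH'good, hH'lin, hsemi⟩ := Aux.exists_semiconj hk hF hFk
  obtain ⟨K, hKgood, hKlin, hright, hleft⟩ := Aux.exists_two_sided_inverse hH'good hH'lin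
  refine ⟨K, hKgood, ?_, ?_⟩
  · rw [Aux.linMap_eq_Lmap, hKlin, Aux.Lmap_one]
  · rw [Aux.linMap_eq_Lmap]
    set A := linMatrix F with hA
    have hgoodLH : Aux.goodM (compM (Aux.Lmap A) H') :=
      Aux.goodM_compM (Aux.goodM_Lmap A) hH'good
    have hF2 : F = compM K (compM (Aux.Lmap A) H') := by
      calc F = compM (idM n) F := (Aux.compM_id_left hF).symm
        _ = compM (compM K H') F := by rw [hleft]
        _ = compM K (compM H' F) := Aux.compM_assoc hH'good hF
        _ = compM K (compM (Aux.Lmap A) H') := by rw [hsemi]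
    calc compM F K = compM (compM K (compM (Aux.Lmap A) H')) K := by rw [← hF2]
      _ = compM K (compM (compM (Aux.Lmap A) H') K) := Aux.compM_assoc hgoodLH hKgood
      _ = compM K (compM (Aux.Lmap A) (compM H' K)) := by
            rw [Aux.compM_assoc hH'good hKgood]
      _ = compM K (compM (Aux.Lmap A) (idM n)) := by rw [hright]
      _ = compM K (Aux.Lmap A) := by rw [Aux.compM_id_right]

end
end

section
/- Define P(F) for F(z₁,z₂) = (z₁φ(z₁z₂), z₂ψ(z₁z₂)) in the centralizer 𝔠 of the diagonal torus by P(F)(t) = t·φ(t)·ψ(t). Then P is a group homomorphism from 𝔠 (under composition) to the group of invertible one-variable formal power series under composition, and P(F) ∘ π = π ∘ F where π(z₁,z₂) = z₁z₂. -/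
noncomputable section

-- === Auxiliary development ===
open Finset

/-- The bidegree `(a,b)` as a finsupp on `Fin 2`. -/
def dg (a b : ℕ) : Fin 2 →₀ ℕ := Finsupp.single 0 a + Finsupp.single 1 b

@[simp] lemma dg_apply0 (a b : ℕ) : dg a b 0 = a := by
  simp [dg, Finsupp.single_apply]

@[simp] lemma dg_apply1 (a b : ℕ) : dg a b 1 = b := by
  simp [dg, Finsupp.single_apply]

lemma eq_dg_self (d : Fin 2 →₀ ℕ) : d = dg (d 0) (d 1) := by
  ext i
  fin_cases i <;> simp

lemma degreeOf_eq (d : Fin 2 →₀ ℕ) : degreeOf d = d 0 + d 1 := by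
  rw [degreeOf, Finsupp.sum_fintype _ _ (fun _ => rfl), Fin.sum_univ_two]

/-- The diagonal embedding of one-variable power series: `f(t) ↦ f(z₁z₂)`. -/
def diagS (f : PowerSeries ℂ) : MvPowerSeries (Fin 2) ℂ :=
  fun d => if d 0 = d 1 then PowerSeries.coeff (d 0) f else 0

lemma coeff_diagS (f : PowerSeries ℂ) (d : Fin 2 →₀ ℕ) :
    MvPowerSeries.coeff d (diagS f) =
      if d 0 = d 1 then PowerSeries.coeff (d 0) f else 0 := rfl

lemma X_pow_mul_X_pow (a b : ℕ) :
    (MvPowerSeries.X 0 : MvPowerSeries (Fin 2) ℂ) ^ a * MvPowerSeries.X 1 ^ b =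
      MvPowerSeries.monomial (dg a b) 1 := by
  rw [MvPowerSeries.X_pow_eq, MvPowerSeries.X_pow_eq, MvPowerSeries.monomial_mul_monomial,
    one_mul, dg]

lemma X0_eq : (MvPowerSeries.X 0 : MvPowerSeries (Fin 2) ℂ) = MvPowerSeries.monomial (dg 1 0) 1 := by
  have := X_pow_mul_X_pow 1 0
  rwa [pow_one, pow_zero, mul_one] at this

lemma X1_eq : (MvPowerSeries.X 1 : MvPowerSeries (Fin 2) ℂ) = MvPowerSeries.monomial (dg 0 1) 1 := by
  have := X_pow_mul_X_pow 0 1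
  rwa [pow_one, pow_zero, one_mul] at this

lemma dg_le_iff (a b : ℕ) (d : Fin 2 →₀ ℕ) : dg a b ≤ d ↔ a ≤ d 0 ∧ b ≤ d 1 := by
  rw [Finsupp.le_def]
  constructor
  · intro h; exact ⟨by simpa using h 0, by simpa using h 1⟩
  · rintro ⟨h1, h2⟩ i; fin_cases i <;> simpa

lemma coeff_mono_mul_diagS (a b : ℕ) (u : PowerSeries ℂ) (d : Fin 2 →₀ ℕ) :
    MvPowerSeries.coeff d (MvPowerSeries.monomial (dg a b) 1 * diagS u) =
      if a ≤ d 0 ∧ b ≤ d 1 ∧ d 0 - a = d 1 - b then PowerSeries.coeff (d 0 - a) u else 0 := by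
  rw [MvPowerSeries.coeff_monomial_mul]
  by_cases h : dg a b ≤ d
  · rw [if_pos h, coeff_diagS, one_mul]
    have h0 : (d - dg a b) 0 = d 0 - a := by simp [Finsupp.tsub_apply]
    have h1 : (d - dg a b) 1 = d 1 - b := by simp [Finsupp.tsub_apply]
    rw [h0, h1]
    obtain ⟨ha, hb⟩ := (dg_le_iff a b d).mp h
    by_cases hd : d 0 - a = d 1 - b
    · rw [if_pos hd, if_pos ⟨ha, hb, hd⟩]
    · rw [if_neg hd, if_neg (by tauto)]
  · rw [if_neg h, dg_le_iff] at *
    rw [if_neg (by tauto)]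

lemma diagS_mul (f g : PowerSeries ℂ) : diagS (f * g) = diagS f * diagS g := by
  apply MvPowerSeries.ext; intro d
  rw [MvPowerSeries.coeff_mul, coeff_diagS]
  by_cases h : d 0 = d 1
  · rw [if_pos h]
    set ι : ℕ → (Fin 2 →₀ ℕ) × (Fin 2 →₀ ℕ) := fun i => (dg i i, dg (d 0 - i) (d 0 - i)) with hι
    have hsub : (range (d 0 + 1)).image ι ⊆ Finset.HasAntidiagonal.antidiagonal d := by
      intro p hp
      obtain ⟨i, hi, rfl⟩ := Finset.mem_image.mp hp
      rw [Finset.HasAntidiagonal.mem_antidiagonal]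
      ext j
      fin_cases j <;> simp [hι, Nat.add_sub_cancel' (Nat.lt_succ_iff.mp (mem_range.mp hi)), ← h]
    rw [← Finset.sum_subset hsub ?van]
    case van =>
      intro p hp hnp
      rw [Finset.HasAntidiagonal.mem_antidiagonal] at hp
      rw [coeff_diagS, coeff_diagS]
      by_cases h1 : p.1 0 = p.1 1
      · by_cases h2 : p.2 0 = p.2 1
        · exfalso; apply hnp
          apply Finset.mem_image.mpr
          refine ⟨p.1 0, ?_, ?_⟩
          · rw [mem_range, Nat.lt_succ_iff]
            have := congrArg (fun q => q 0) hp
            simp only [Finsupp.add_apply] at this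
            omega
          · have hp0 := congrArg (fun q => q 0) hp
            simp only [Finsupp.add_apply] at hp0
            have e1 : p.1 = dg (p.1 0) (p.1 0) := (eq_dg_self p.1).trans (congrArg _ h1.symm)
            have e2 : p.2 = dg (p.2 0) (p.2 0) := (eq_dg_self p.2).trans (congrArg _ h2.symm)
            have hq : p.2 0 = d 0 - p.1 0 := by omega
            simp only [hι]
            exact Prod.ext e1.symm (by rw [e2, hq])
        · rw [if_neg h2, mul_zero]
      · rw [if_neg h1, zero_mul]
    · rw [Finset.sum_image ?inj]
      case inj =>
        intro i _ j _ hij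
        have := congrArg (fun q => q.1 0) hij
        simpa [hι] using this
      rw [PowerSeries.coeff_mul, Finset.Nat.sum_antidiagonal_eq_sum_range_succ_mk]
      apply Finset.sum_congr rfl
      intro i hi
      rw [coeff_diagS, coeff_diagS]
      simp [hι]
  · rw [if_neg h]
    symm
    apply Finset.sum_eq_zero
    intro p hp
    rw [Finset.HasAntidiagonal.mem_antidiagonal] at hp
    rw [coeff_diagS, coeff_diagS]
    by_cases h1 : p.1 0 = p.1 1
    · by_cases h2 : p.2 0 = p.2 1
      · exfalso
        apply h
        have h0 := congrArg (fun q => q 0) hp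
        have hh1 := congrArg (fun q => q 1) hp
        simp only [Finsupp.add_apply] at h0 hh1
        omega
      · rw [if_neg h2, mul_zero]
    · rw [if_neg h1, zero_mul]

lemma diagS_pow (f : PowerSeries ℂ) (k : ℕ) (hk : 1 ≤ k) : diagS (f ^ k) = diagS f ^ k := by
  induction k with
  | zero => omega
  | succ k ih =>
    rcases Nat.eq_zero_or_pos k with h0 | h0
    · subst h0; rw [pow_one, pow_one]
    · rw [pow_succ, pow_succ, diagS_mul, ih h0]

lemma diagS_X : diagS PowerSeries.X = pXY := by
  apply MvPowerSeries.ext; intro d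
  rw [coeff_diagS, pXY]
  have : (MvPowerSeries.X 0 : MvPowerSeries (Fin 2) ℂ) * MvPowerSeries.X 1 =
      MvPowerSeries.monomial (dg 1 1) 1 := by
    have := X_pow_mul_X_pow 1 1; rwa [pow_one, pow_one] at this
  rw [this, MvPowerSeries.coeff_monomial]
  by_cases h : d 0 = d 1
  · rw [if_pos h, PowerSeries.coeff_X]
    by_cases h1 : d 0 = 1
    · rw [if_pos h1, if_pos]
      rw [eq_dg_self d, ← h, h1]
    · rw [if_neg h1, if_neg]
      intro hd
      rw [eq_dg_self d] at hd
      have h0 := congrArg (fun q => q 0) hd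
      simp at h0
      omega
  · rw [if_neg h, if_neg]
    intro hd
    rw [eq_dg_self d] at hd
    have h0 := congrArg (fun q => q 0) hd
    have h1 := congrArg (fun q => q 1) hd
    simp at h0 h1
    omega

lemma coeff_compP (f g : PowerSeries ℂ) (n : ℕ) :
    PowerSeries.coeff n (compP f g) =
      ∑ j ∈ Finset.range (n + 1), PowerSeries.coeff j f * PowerSeries.coeff n (g ^ j) := by
  rw [compP, PowerSeries.coeff_mk]

lemma coeff_pow_eq_zero {g : PowerSeries ℂ} (hg : PowerSeries.constantCoeff g = 0)
    {j n : ℕ} (h : n < j) : PowerSeries.coeff n (g ^ j) = 0 := by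
  induction j generalizing n with
  | zero => omega
  | succ j ih =>
    rw [pow_succ, mul_comm, PowerSeries.coeff_mul]
    apply Finset.sum_eq_zero
    intro p hp
    rw [Finset.HasAntidiagonal.mem_antidiagonal] at hp
    rcases Nat.eq_zero_or_pos p.1 with h0 | h0
    · rw [h0, PowerSeries.coeff_zero_eq_constantCoeff, hg, zero_mul]
    · rw [ih (n := p.2) (by omega), mul_zero]

lemma coeff_mul_compP (u f g : PowerSeries ℂ) (hg : PowerSeries.constantCoeff g = 0) (m : ℕ) :
    PowerSeries.coeff m (u * compP f g) =
      ∑ k ∈ Finset.range (m + 1), PowerSeries.coeff k f * PowerSeries.coeff m (u * g ^ k) := by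
  rw [PowerSeries.coeff_mul]
  have step : ∀ p ∈ Finset.HasAntidiagonal.antidiagonal m,
      PowerSeries.coeff p.1 u * PowerSeries.coeff p.2 (compP f g) =
      ∑ k ∈ Finset.range (m + 1), PowerSeries.coeff k f *
        (PowerSeries.coeff p.1 u * PowerSeries.coeff p.2 (g ^ k)) := by
    intro p hp
    rw [Finset.HasAntidiagonal.mem_antidiagonal] at hp
    rw [coeff_compP, Finset.mul_sum]
    rw [← Finset.sum_subset (Finset.range_subset_range.mpr (by omega : p.2 + 1 ≤ m + 1)) ?van]
    · apply Finset.sum_congr rfl; intro k _; ring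
    case van =>
      intro k _ hk
      rw [mem_range, Nat.lt_succ_iff, not_le] at hk
      rw [coeff_pow_eq_zero hg hk, mul_zero, mul_zero]
  rw [Finset.sum_congr rfl step, Finset.sum_comm]
  apply Finset.sum_congr rfl
  intro k _
  rw [PowerSeries.coeff_mul, Finset.mul_sum]

lemma tri_sum (n : ℕ) (F : ℕ → ℕ → ℂ) :
    ∑ j ∈ range (n + 1), ∑ a ∈ range (j + 1), F a (j - a) =
      ∑ a ∈ range (n + 1), ∑ b ∈ range (n + 1 - a), F a b := by
  rw [Finset.sum_sigma', Finset.sum_sigma']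
  apply Finset.sum_nbij' (i := fun p => ⟨p.2, p.1 - p.2⟩) (j := fun q => ⟨q.1 + q.2, q.1⟩) <;>
  · rintro ⟨x, y⟩ hp
    simp only [Finset.mem_sigma, mem_range, Nat.lt_succ_iff] at hp ⊢
    try omega
    try exact Sigma.ext (by dsimp; omega) (by dsimp; constructor <;> omega)
    try rw [Nat.add_sub_cancel_left]

lemma compP_mul (f₁ f₂ g : PowerSeries ℂ) (hg : PowerSeries.constantCoeff g = 0) :
    compP (f₁ * f₂) g = compP f₁ g * compP f₂ g := by
  apply PowerSeries.ext; intro n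
  rw [coeff_compP]
  have lhs : ∑ j ∈ range (n + 1), PowerSeries.coeff j (f₁ * f₂) *
      PowerSeries.coeff n (g ^ j) =
      ∑ a ∈ range (n + 1), ∑ b ∈ range (n + 1),
        PowerSeries.coeff a f₁ * PowerSeries.coeff b f₂ *
          PowerSeries.coeff n (g ^ (a + b)) := by
    have e1 : ∀ j ∈ range (n + 1), PowerSeries.coeff j (f₁ * f₂) *
        PowerSeries.coeff n (g ^ j) =
        ∑ a ∈ range (j + 1), PowerSeries.coeff a f₁ * PowerSeries.coeff (j - a) f₂ *
          PowerSeries.coeff n (g ^ (a + (j - a))) := by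
      intro j hj
      rw [PowerSeries.coeff_mul, Finset.Nat.sum_antidiagonal_eq_sum_range_succ_mk,
        Finset.sum_mul]
      apply Finset.sum_congr rfl
      intro a ha
      rw [mem_range, Nat.lt_succ_iff] at ha
      rw [Nat.add_sub_cancel' ha]
    rw [Finset.sum_congr rfl e1,
      tri_sum n (fun a b => PowerSeries.coeff a f₁ * PowerSeries.coeff b f₂ *
        PowerSeries.coeff n (g ^ (a + b)))]
    apply Finset.sum_congr rfl
    intro a ha
    rw [mem_range, Nat.lt_succ_iff] at ha
    apply Finset.sum_subset (Finset.range_subset_range.mpr (by omega : n + 1 - a ≤ n + 1))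
    intro b _ hb
    rw [mem_range] at hb
    rw [coeff_pow_eq_zero hg (by omega), mul_zero]
  have e2 : ∀ p ∈ Finset.HasAntidiagonal.antidiagonal n,
      PowerSeries.coeff p.1 (compP f₁ g) * PowerSeries.coeff p.2 (compP f₂ g) =
      ∑ a ∈ range (n + 1), ∑ b ∈ range (n + 1),
        PowerSeries.coeff a f₁ * PowerSeries.coeff b f₂ *
          (PowerSeries.coeff p.1 (g ^ a) * PowerSeries.coeff p.2 (g ^ b)) := by
    intro p hp
    rw [Finset.HasAntidiagonal.mem_antidiagonal] at hp
    have h1 : ∑ j ∈ range (p.1 + 1), PowerSeries.coeff j f₁ * PowerSeries.coeff p.1 (g ^ j) =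
        ∑ j ∈ range (n + 1), PowerSeries.coeff j f₁ * PowerSeries.coeff p.1 (g ^ j) := by
      apply Finset.sum_subset (Finset.range_subset_range.mpr (by omega : p.1 + 1 ≤ n + 1))
      intro k _ hk
      rw [mem_range, Nat.lt_succ_iff, not_le] at hk
      rw [coeff_pow_eq_zero hg hk, mul_zero]
    have h2 : ∑ j ∈ range (p.2 + 1), PowerSeries.coeff j f₂ * PowerSeries.coeff p.2 (g ^ j) =
        ∑ j ∈ range (n + 1), PowerSeries.coeff j f₂ * PowerSeries.coeff p.2 (g ^ j) := by
      apply Finset.sum_subset (Finset.range_subset_range.mpr (by omega : p.2 + 1 ≤ n + 1))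
      intro k _ hk
      rw [mem_range, Nat.lt_succ_iff, not_le] at hk
      rw [coeff_pow_eq_zero hg hk, mul_zero]
    rw [coeff_compP, coeff_compP, h1, h2, Finset.sum_mul_sum]
    apply Finset.sum_congr rfl; intro a _
    apply Finset.sum_congr rfl; intro b _
    ring
  have rhs : PowerSeries.coeff n (compP f₁ g * compP f₂ g) =
      ∑ a ∈ range (n + 1), ∑ b ∈ range (n + 1),
        PowerSeries.coeff a f₁ * PowerSeries.coeff b f₂ *
          PowerSeries.coeff n (g ^ (a + b)) := by
    rw [PowerSeries.coeff_mul, Finset.sum_congr rfl e2, Finset.sum_comm]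
    apply Finset.sum_congr rfl; intro a _
    rw [Finset.sum_comm]
    apply Finset.sum_congr rfl; intro b _
    rw [← Finset.mul_sum, ← PowerSeries.coeff_mul, ← pow_add]
  rw [lhs, rhs]

lemma compP_X (g : PowerSeries ℂ) (hg : PowerSeries.constantCoeff g = 0) :
    compP PowerSeries.X g = g := by
  apply PowerSeries.ext; intro n
  rw [coeff_compP]
  have e : ∀ j ∈ range (n + 1), PowerSeries.coeff j PowerSeries.X *
      PowerSeries.coeff n (g ^ j) =
      if j = 1 then PowerSeries.coeff n (g ^ j) else 0 := by
    intro j _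
    rw [PowerSeries.coeff_X]
    split_ifs <;> simp
  rw [Finset.sum_congr rfl e, Finset.sum_ite_eq' (range (n + 1)) 1
    (fun j => PowerSeries.coeff n (g ^ j))]
  by_cases hn : 1 ∈ range (n + 1)
  · rw [if_pos hn, pow_one]
  · rw [if_neg hn]
    rw [mem_range] at hn
    have : n = 0 := by omega
    rw [this, PowerSeries.coeff_zero_eq_constantCoeff, hg]

lemma substPM_eq_diagS (f : PowerSeries ℂ) : substPM pXY f = diagS f := by
  funext d
  have hmono : ∀ j : ℕ, (pXY : MvPowerSeries (Fin 2) ℂ) ^ j =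
      MvPowerSeries.monomial (dg j j) 1 := by
    intro j
    rw [pXY, mul_pow, X_pow_mul_X_pow]
  have : ∀ j ∈ Finset.range (degreeOf d + 1),
      PowerSeries.coeff j f * MvPowerSeries.coeff d (pXY ^ j) =
      if j = d 0 ∧ d 0 = d 1 then PowerSeries.coeff j f else 0 := by
    intro j _
    rw [hmono j, MvPowerSeries.coeff_monomial]
    by_cases hj : d = dg j j
    · rw [if_pos hj, mul_one, if_pos]
      have h0 := congrArg (fun q => q 0) hj
      have h1 := congrArg (fun q => q 1) hj
      simp at h0 h1
      omega
    · rw [if_neg hj, mul_zero, if_neg]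
      intro ⟨hj0, hj1⟩
      apply hj
      rw [eq_dg_self d, ← hj1, ← hj0]
  rw [substPM, Finset.sum_congr rfl this]
  show _ = MvPowerSeries.coeff d (diagS f)
  rw [coeff_diagS]
  by_cases h : d 0 = d 1
  · have e2 : ∀ j ∈ Finset.range (degreeOf d + 1),
        (if j = d 0 ∧ d 0 = d 1 then PowerSeries.coeff j f else 0) =
        if j = d 0 then PowerSeries.coeff j f else 0 := by
      intro j _; by_cases hj : j = d 0 <;> simp [hj, h]
    rw [Finset.sum_congr rfl e2, Finset.sum_ite_eq' (Finset.range (degreeOf d + 1)) (d 0)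
      (fun j => PowerSeries.coeff j f), if_pos, if_pos h]
    rw [Finset.mem_range, degreeOf_eq]
    omega
  · rw [if_neg h]
    apply Finset.sum_eq_zero
    intro j _
    rw [if_neg (by tauto)]

lemma Mmap_zero (φ ψ : PowerSeries ℂ) :
    Mmap φ ψ 0 = MvPowerSeries.monomial (dg 1 0) 1 * diagS φ := by
  show MvPowerSeries.X 0 * substPM pXY φ = _
  rw [substPM_eq_diagS, X0_eq]

lemma Mmap_one (φ ψ : PowerSeries ℂ) :
    Mmap φ ψ 1 = MvPowerSeries.monomial (dg 0 1) 1 * diagS ψ := by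
  show MvPowerSeries.X 1 * substPM pXY ψ = _
  rw [substPM_eq_diagS, X1_eq]

lemma diagS_one : diagS 1 = 1 := by
  apply MvPowerSeries.ext; intro d
  rw [coeff_diagS, MvPowerSeries.coeff_one]
  by_cases h : d = 0
  · subst h; simp
  · rw [if_neg h]
    by_cases h0 : d 0 = d 1
    · rw [if_pos h0, PowerSeries.coeff_one, if_neg]
      intro hd0
      exact h (by rw [eq_dg_self d, hd0, ← h0, hd0]; ext i; fin_cases i <;> simp)
    · rw [if_neg h0]

lemma diagS_pow' (f : PowerSeries ℂ) (k : ℕ) : diagS (f ^ k) = diagS f ^ k := by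
  induction k with
  | zero => rw [pow_zero, pow_zero, diagS_one]
  | succ k ih => rw [pow_succ, pow_succ, diagS_mul, ih]

lemma prodG (φ' ψ' : PowerSeries ℂ) (e : Fin 2 →₀ ℕ) :
    (∏ i, Mmap φ' ψ' i ^ e i : MvPowerSeries (Fin 2) ℂ) =
      MvPowerSeries.monomial (dg (e 0) (e 1)) 1 * diagS (φ' ^ e 0 * ψ' ^ e 1) := by
  rw [Fin.prod_univ_two, Mmap_zero, Mmap_one, ← X0_eq, ← X1_eq, diagS_mul, diagS_pow', diagS_pow',
    ← X_pow_mul_X_pow]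
  ring

set_option maxHeartbeats 1000000 in
lemma substM_Mmap0 (φ φ' ψ' : PowerSeries ℂ) :
    substM (Mmap φ' ψ') (MvPowerSeries.monomial (dg 1 0) 1 * diagS φ) =
      MvPowerSeries.monomial (dg 1 0) 1 *
        diagS (φ' * compP φ (PowerSeries.X * φ' * ψ')) := by
  have hg : PowerSeries.constantCoeff (PowerSeries.X * φ' * ψ') = 0 := by simp
  apply MvPowerSeries.ext; intro d
  have lhs_eq : MvPowerSeries.coeff d
      (substM (Mmap φ' ψ') (MvPowerSeries.monomial (dg 1 0) 1 * diagS φ)) =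
      ∑ e ∈ Finset.Iic (Finsupp.equivFunOnFinite.symm fun _ => degreeOf d),
        MvPowerSeries.coeff e (MvPowerSeries.monomial (dg 1 0) 1 * diagS φ) *
          MvPowerSeries.coeff d (∏ i, Mmap φ' ψ' i ^ e i) := rfl
  rw [lhs_eq, coeff_mono_mul_diagS]
  have term_eq : ∀ e ∈ Finset.Iic (Finsupp.equivFunOnFinite.symm fun _ => degreeOf d),
      MvPowerSeries.coeff e (MvPowerSeries.monomial (dg 1 0) 1 * diagS φ) *
        MvPowerSeries.coeff d (∏ i, Mmap φ' ψ' i ^ e i) =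
      if (1 ≤ e 0 ∧ 0 ≤ e 1 ∧ e 0 - 1 = e 1 - 0) ∧
          (e 0 ≤ d 0 ∧ e 1 ≤ d 1 ∧ d 0 - e 0 = d 1 - e 1) then
        PowerSeries.coeff (e 0 - 1) φ *
          PowerSeries.coeff (d 0 - e 0) (φ' ^ e 0 * ψ' ^ e 1) else 0 := by
    intro e _
    rw [prodG, coeff_mono_mul_diagS, coeff_mono_mul_diagS]
    by_cases h1 : 1 ≤ e 0 ∧ 0 ≤ e 1 ∧ e 0 - 1 = e 1 - 0 <;>
      by_cases h2 : e 0 ≤ d 0 ∧ e 1 ≤ d 1 ∧ d 0 - e 0 = d 1 - e 1 <;>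
        simp [h1, h2]
  rw [Finset.sum_congr rfl term_eq]
  by_cases hd : d 0 = d 1 + 1
  · rw [if_pos ⟨by omega, by omega, by omega⟩, show d 0 - 1 = d 1 by omega,
      coeff_mul_compP φ' φ _ hg (d 1)]
    have hterm : ∀ k ∈ Finset.range (d 1 + 1),
        PowerSeries.coeff k φ *
          PowerSeries.coeff (d 1) (φ' * (PowerSeries.X * φ' * ψ') ^ k) =
        PowerSeries.coeff k φ *
          PowerSeries.coeff (d 1 - k) (φ' ^ (k + 1) * ψ' ^ k) := by
      intro k hk
      rw [Finset.mem_range, Nat.lt_succ_iff] at hk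
      have e1 : φ' * (PowerSeries.X * φ' * ψ') ^ k =
          PowerSeries.X ^ k * (φ' ^ (k + 1) * ψ' ^ k) := by ring
      have e2 := PowerSeries.coeff_X_pow_mul (φ' ^ (k + 1) * ψ' ^ k) k (d 1 - k)
      rw [Nat.sub_add_cancel hk] at e2
      rw [e1, e2]
    rw [Finset.sum_congr rfl hterm]
    set ι : ℕ → (Fin 2 →₀ ℕ) := fun k => dg (k + 1) k with hι
    have hsub : (Finset.range (d 1 + 1)).image ι ⊆
        Finset.Iic (Finsupp.equivFunOnFinite.symm fun _ => degreeOf d) := by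
      intro e he
      obtain ⟨k, hk, rfl⟩ := Finset.mem_image.mp he
      rw [Finset.mem_range, Nat.lt_succ_iff] at hk
      rw [Finset.mem_Iic, Finsupp.le_def]
      intro i
      have : (Finsupp.equivFunOnFinite.symm fun _ : Fin 2 => degreeOf d) i = degreeOf d := rfl
      rw [this, degreeOf_eq]
      fin_cases i <;> simp [hι] <;> omega
    rw [← Finset.sum_subset hsub ?van]
    case van =>
      intro e he hne
      by_cases hc : (1 ≤ e 0 ∧ 0 ≤ e 1 ∧ e 0 - 1 = e 1 - 0) ∧
          (e 0 ≤ d 0 ∧ e 1 ≤ d 1 ∧ d 0 - e 0 = d 1 - e 1)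
      · exfalso
        apply hne
        apply Finset.mem_image.mpr
        refine ⟨e 1, Finset.mem_range.mpr (by omega), ?_⟩
        have : e 1 + 1 = e 0 := by omega
        rw [hι]; dsimp only
        rw [this]
        exact (eq_dg_self e).symm
      · rw [if_neg hc]
    · rw [Finset.sum_image ?inj]
      case inj =>
        intro k _ k' _ hkk
        have := congrArg (fun q => q 1) hkk
        simpa [hι] using this
      apply Finset.sum_congr rfl
      intro k hk
      rw [Finset.mem_range, Nat.lt_succ_iff] at hk
      rw [if_pos]
      · have h1 : ι k 0 - 1 = k := by simp [hι]
        have h2 : d 0 - ι k 0 = d 1 - k := by simp [hι]; omega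
        have h3 : ι k 0 = k + 1 := by simp [hι]
        have h4 : ι k 1 = k := by simp [hι]
        rw [h1, h2, h3, h4]
      · refine ⟨⟨?_, ?_, ?_⟩, ?_, ?_, ?_⟩ <;> simp [hι] <;> omega
  · rw [if_neg (by intro hc; exact hd (by omega))]
    apply Finset.sum_eq_zero
    intro e _
    rw [if_neg]
    rintro ⟨⟨a1, a2, a3⟩, b1, b2, b3⟩
    exact hd (by omega)

set_option maxHeartbeats 1000000 in
lemma substM_Mmap1 (ψ φ' ψ' : PowerSeries ℂ) :
    substM (Mmap φ' ψ') (MvPowerSeries.monomial (dg 0 1) 1 * diagS ψ) =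
      MvPowerSeries.monomial (dg 0 1) 1 *
        diagS (ψ' * compP ψ (PowerSeries.X * φ' * ψ')) := by
  have hg : PowerSeries.constantCoeff (PowerSeries.X * φ' * ψ') = 0 := by simp
  apply MvPowerSeries.ext; intro d
  have lhs_eq : MvPowerSeries.coeff d
      (substM (Mmap φ' ψ') (MvPowerSeries.monomial (dg 0 1) 1 * diagS ψ)) =
      ∑ e ∈ Finset.Iic (Finsupp.equivFunOnFinite.symm fun _ => degreeOf d),
        MvPowerSeries.coeff e (MvPowerSeries.monomial (dg 0 1) 1 * diagS ψ) *
          MvPowerSeries.coeff d (∏ i, Mmap φ' ψ' i ^ e i) := rfl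
  rw [lhs_eq, coeff_mono_mul_diagS]
  have term_eq : ∀ e ∈ Finset.Iic (Finsupp.equivFunOnFinite.symm fun _ => degreeOf d),
      MvPowerSeries.coeff e (MvPowerSeries.monomial (dg 0 1) 1 * diagS ψ) *
        MvPowerSeries.coeff d (∏ i, Mmap φ' ψ' i ^ e i) =
      if (0 ≤ e 0 ∧ 1 ≤ e 1 ∧ e 0 - 0 = e 1 - 1) ∧
          (e 0 ≤ d 0 ∧ e 1 ≤ d 1 ∧ d 0 - e 0 = d 1 - e 1) then
        PowerSeries.coeff (e 0 - 0) ψ *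
          PowerSeries.coeff (d 0 - e 0) (φ' ^ e 0 * ψ' ^ e 1) else 0 := by
    intro e _
    rw [prodG, coeff_mono_mul_diagS, coeff_mono_mul_diagS]
    by_cases h1 : 0 ≤ e 0 ∧ 1 ≤ e 1 ∧ e 0 - 0 = e 1 - 1 <;>
      by_cases h2 : e 0 ≤ d 0 ∧ e 1 ≤ d 1 ∧ d 0 - e 0 = d 1 - e 1 <;>
        simp [h1, h2]
  rw [Finset.sum_congr rfl term_eq]
  by_cases hd : d 1 = d 0 + 1
  · rw [if_pos ⟨by omega, by omega, by omega⟩, Nat.sub_zero,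
      coeff_mul_compP ψ' ψ _ hg (d 0)]
    have hterm : ∀ k ∈ Finset.range (d 0 + 1),
        PowerSeries.coeff k ψ *
          PowerSeries.coeff (d 0) (ψ' * (PowerSeries.X * φ' * ψ') ^ k) =
        PowerSeries.coeff k ψ *
          PowerSeries.coeff (d 0 - k) (φ' ^ k * ψ' ^ (k + 1)) := by
      intro k hk
      rw [Finset.mem_range, Nat.lt_succ_iff] at hk
      have e1 : ψ' * (PowerSeries.X * φ' * ψ') ^ k =
          PowerSeries.X ^ k * (φ' ^ k * ψ' ^ (k + 1)) := by ring
      have e2 := PowerSeries.coeff_X_pow_mul (φ' ^ k * ψ' ^ (k + 1)) k (d 0 - k)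
      rw [Nat.sub_add_cancel hk] at e2
      rw [e1, e2]
    rw [Finset.sum_congr rfl hterm]
    set ι : ℕ → (Fin 2 →₀ ℕ) := fun k => dg k (k + 1) with hι
    have hsub : (Finset.range (d 0 + 1)).image ι ⊆
        Finset.Iic (Finsupp.equivFunOnFinite.symm fun _ => degreeOf d) := by
      intro e he
      obtain ⟨k, hk, rfl⟩ := Finset.mem_image.mp he
      rw [Finset.mem_range, Nat.lt_succ_iff] at hk
      rw [Finset.mem_Iic, Finsupp.le_def]
      intro i
      have : (Finsupp.equivFunOnFinite.symm fun _ : Fin 2 => degreeOf d) i = degreeOf d := rfl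
      rw [this, degreeOf_eq]
      fin_cases i <;> simp [hι] <;> omega
    rw [← Finset.sum_subset hsub ?van]
    case van =>
      intro e he hne
      by_cases hc : (0 ≤ e 0 ∧ 1 ≤ e 1 ∧ e 0 - 0 = e 1 - 1) ∧
          (e 0 ≤ d 0 ∧ e 1 ≤ d 1 ∧ d 0 - e 0 = d 1 - e 1)
      · exfalso
        apply hne
        apply Finset.mem_image.mpr
        refine ⟨e 0, Finset.mem_range.mpr (by omega), ?_⟩
        have : e 0 + 1 = e 1 := by omega
        rw [hι]; dsimp only
        rw [this]
        exact (eq_dg_self e).symm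
      · rw [if_neg hc]
    · rw [Finset.sum_image ?inj]
      case inj =>
        intro k _ k' _ hkk
        have := congrArg (fun q => q 0) hkk
        simpa [hι] using this
      apply Finset.sum_congr rfl
      intro k hk
      rw [Finset.mem_range, Nat.lt_succ_iff] at hk
      rw [if_pos]
      · have h1 : ι k 0 - 0 = k := by simp [hι]
        have h2 : d 0 - ι k 0 = d 0 - k := by simp [hι]
        have h3 : ι k 0 = k := by simp [hι]
        have h4 : ι k 1 = k + 1 := by simp [hι]
        rw [h1, h2, h3, h4]
      · refine ⟨⟨?_, ?_, ?_⟩, ?_, ?_, ?_⟩ <;> simp [hι] <;> omega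
  · rw [if_neg (by intro hc; exact hd (by omega))]
    apply Finset.sum_eq_zero
    intro e _
    rw [if_neg]
    rintro ⟨⟨a1, a2, a3⟩, b1, b2, b3⟩
    exact hd (by omega)

theorem P_is_homomorphism' (φ ψ φ' ψ' : PowerSeries ℂ) :
    substPM pXY (PowerSeries.X * φ * ψ) = (Mmap φ ψ) 0 * (Mmap φ ψ) 1 ∧
    substPM pXY (compP (PowerSeries.X * φ * ψ) (PowerSeries.X * φ' * ψ')) =
      (compM (Mmap φ ψ) (Mmap φ' ψ')) 0 * (compM (Mmap φ ψ) (Mmap φ' ψ')) 1 := by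
  constructor
  · rw [substPM_eq_diagS, Mmap_zero, Mmap_one]
    simp only [diagS_mul]
    rw [diagS_X, ← X0_eq, ← X1_eq, pXY]
    ring
  · have hg : PowerSeries.constantCoeff (PowerSeries.X * φ' * ψ') = 0 := by simp
    have hcomp : compP (PowerSeries.X * φ * ψ) (PowerSeries.X * φ' * ψ') =
        (PowerSeries.X * φ' * ψ') * compP φ (PowerSeries.X * φ' * ψ') *
          compP ψ (PowerSeries.X * φ' * ψ') := by
      rw [compP_mul _ _ _ hg, compP_mul _ _ _ hg, compP_X _ hg]
    have c0 : compM (Mmap φ ψ) (Mmap φ' ψ') 0 =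
        MvPowerSeries.monomial (dg 1 0) 1 *
          diagS (φ' * compP φ (PowerSeries.X * φ' * ψ')) := by
      show substM (Mmap φ' ψ') (Mmap φ ψ 0) = _
      rw [Mmap_zero, substM_Mmap0]
    have c1 : compM (Mmap φ ψ) (Mmap φ' ψ') 1 =
        MvPowerSeries.monomial (dg 0 1) 1 *
          diagS (ψ' * compP ψ (PowerSeries.X * φ' * ψ')) := by
      show substM (Mmap φ' ψ') (Mmap φ ψ 1) = _
      rw [Mmap_one, substM_Mmap1]
    rw [substPM_eq_diagS, hcomp, c0, c1]
    simp only [diagS_mul]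
    rw [diagS_X, ← X0_eq, ← X1_eq, pXY]
    ring

/-- For F = (z₁φ(p), z₂ψ(p)) in the centralizer 𝔠 of the diagonal torus, set
P(F)(t) = t·φ(t)·ψ(t).  Then P(F) is semi-conjugate to F via π(z₁,z₂) = z₁z₂
(P(F) ∘ π = π ∘ F, where π ∘ F = F₀·F₁), and P is a homomorphism:
P(F) ∘ P(G) is semi-conjugate to F ∘ G via π, so that P(F ∘ G) = P(F) ∘ P(G). -/
theorem P_is_homomorphism (φ ψ φ' ψ' : PowerSeries ℂ)
    (hφ : PowerSeries.constantCoeff φ ≠ 0) (hψ : PowerSeries.constantCoeff ψ ≠ 0)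
    (hφ' : PowerSeries.constantCoeff φ' ≠ 0) (hψ' : PowerSeries.constantCoeff ψ' ≠ 0) :
    substPM pXY (PowerSeries.X * φ * ψ) = (Mmap φ ψ) 0 * (Mmap φ ψ) 1 ∧
    substPM pXY (compP (PowerSeries.X * φ * ψ) (PowerSeries.X * φ' * ψ')) =
      (compM (Mmap φ ψ) (Mmap φ' ψ')) 0 * (compM (Mmap φ ψ) (Mmap φ' ψ')) 1 := by
  exact P_is_homomorphism' φ ψ φ' ψ'

end
end
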